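/- Let K = ℚ(√D) be a real quadratic field and let α ∈ O_K be a totally positive algebraic integer with conjugate α′. If α is indecomposable (not a sum of two totally positive integers of O_K) and b is a nonzero rational integer with b² < 4·N(α) (where N(α) = αα′), then the binary form Q(x,y) = αx² + bxy + α′y² is totally positive definite and additively indecomposable as an integral (non-classical) form over O_K. -/
import Mathlib

open NumberField

/-- `a x² + b xy + c y²` over `K` is totally positive semi-definite. -/
def TPSDK (K : Type*) [Field K] (a b c : K) : Prop :=
  ∀ σ : K →+* ℝ, ∀ u v : ℝ, 0 ≤ σ a * u ^ 2 + σ b * (u * v) + σ c * v ^ 2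

/-- `a x² + b xy + c y²` over `K` is totally positive definite. -/
def TPDK (K : Type*) [Field K] (a b c : K) : Prop :=
  ∀ σ : K →+* ℝ, ∀ u v : ℝ, (u ≠ 0 ∨ v ≠ 0) →
    0 < σ a * u ^ 2 + σ b * (u * v) + σ c * v ^ 2

/-- No rational square root of a squarefree `D > 1`. -/
lemma aux_no_rat_sqrt (D : ℤ) (hsf : Squarefree D) (h1 : 1 < D) (q : ℚ)
    (hq : q ^ 2 = (D : ℚ)) : False := by
  have hint : IsIntegral ℤ q := by
    refine ⟨Polynomial.X ^ 2 - Polynomial.C D, ?_, ?_⟩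
    · exact Polynomial.monic_X_pow_sub_C _ (by norm_num)
    · rw [Polynomial.eval₂_sub, Polynomial.eval₂_pow, Polynomial.eval₂_X,
        Polynomial.eval₂_C]
      simp [hq]
  obtain ⟨n, hn⟩ := IsIntegrallyClosed.isIntegral_iff.mp hint
  have hn2 : (n : ℚ) = q := by exact_mod_cast hn
  have hnq : (n : ℚ) ^ 2 = (D : ℚ) := by rw [hn2, hq]
  have hnD : n ^ 2 = D := by exact_mod_cast hnq
  have hu : IsUnit n := hsf n (by rw [← hnD]; ring_nf; exact dvd_refl _)
  rcases Int.isUnit_iff.mp hu with h | h <;> subst h <;> norm_num at hnD <;> omega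

/-- A real quadratic field has a real embedding. -/
lemma aux_real_embedding (D : ℤ) (hsf : Squarefree D) (h1 : 1 < D)
    (K : Type*) [Field K] [NumberField K] (r : K) (hr : r ^ 2 = D)
    (hdeg : Module.finrank ℚ K = 2) : Nonempty (K →+* ℝ) := by
  have hirr : ∀ q : ℚ, (q : K) ≠ r := by
    intro q hq
    apply aux_no_rat_sqrt D hsf h1 q
    have h2 : ((q : K)) ^ 2 = (D : K) := by rw [hq, hr]
    have h3 : ((q ^ 2 : ℚ) : K) = ((D : ℚ) : K) := by push_cast; exact h2
    exact_mod_cast h3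
  have hli : LinearIndependent ℚ ![(1 : K), r] := by
    rw [LinearIndependent.pair_iff]
    intro s t hst
    rw [Rat.smul_def, Rat.smul_def, mul_one] at hst
    by_cases ht : t = 0
    · subst ht
      simp only [Rat.cast_zero, zero_mul, add_zero] at hst
      exact ⟨by exact_mod_cast hst, rfl⟩
    · exfalso
      apply hirr (-s / t)
      have htK : ((t : ℚ) : K) ≠ 0 := by exact_mod_cast ht
      push_cast
      field_simp
      linear_combination -hst
  have hspan : Submodule.span ℚ (Set.range ![(1 : K), r]) = ⊤ := by
    apply Submodule.eq_top_of_finrank_eq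
    rw [finrank_span_eq_card hli, hdeg]
    simp
  have hmem : ∀ x : K, ∃ p q : ℚ, p • (1 : K) + q • r = x := by
    intro x
    have hx : x ∈ Submodule.span ℚ ({(1 : K), r} : Set K) := by
      have hrange : (Set.range ![(1 : K), r]) = {(1 : K), r} := by
        simp [Matrix.range_cons, Matrix.range_empty, Set.pair_comm]
      rw [← hrange, hspan]; trivial
    exact Submodule.mem_span_pair.mp hx
  have hcard : 0 < Fintype.card (K →+* ℂ) := by
    rw [NumberField.Embeddings.card K ℂ, hdeg]; norm_num
  obtain ⟨φ⟩ := Fintype.card_pos_iff.mp hcard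
  have hz : (φ r) ^ 2 = (D : ℂ) := by rw [← map_pow, hr, map_intCast]
  have him_r : (φ r).im = 0 := by
    by_contra him
    have h1' : ((φ r) ^ 2).im = 0 := by rw [hz]; simp
    have h2' : ((φ r) ^ 2).re = (D : ℝ) := by rw [hz]; simp
    rw [pow_two, Complex.mul_im] at h1'
    rw [pow_two, Complex.mul_re] at h2'
    have hre : (φ r).re = 0 := by
      rcases mul_eq_zero.mp (by linarith : (φ r).re * (φ r).im = 0) with h | h
      · exact h
      · exact absurd h him
    rw [hre] at h2'
    have hD : (0:ℝ) < (D : ℝ) := by exact_mod_cast (by omega : (0:ℤ) < D)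
    nlinarith [sq_nonneg (φ r).im]
  have him : ∀ x : K, (φ x).im = 0 := by
    intro x
    obtain ⟨p, q, hpq⟩ := hmem x
    rw [← hpq, Rat.smul_def, Rat.smul_def, mul_one, map_add, map_mul,
      map_ratCast, map_ratCast]
    simp [Complex.add_im, Complex.mul_im, him_r]
  exact ⟨{
    toFun := fun x => (φ x).re
    map_one' := by simp
    map_mul' := fun x y => show (φ (x * y)).re = (φ x).re * (φ y).re by
      rw [map_mul, Complex.mul_re, him x, him y]; ring
    map_zero' := by simp
    map_add' := fun x y => show (φ (x + y)).re = (φ x).re + (φ y).re by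
      rw [map_add, Complex.add_re] }⟩

/-- TPSD forms have nonneg outer coefficients at every real place. -/
lemma aux_a_nonneg {K : Type*} [Field K] {a b c : K} (h : TPSDK K a b c)
    (σ : K →+* ℝ) : 0 ≤ σ a ∧ 0 ≤ σ c :=
  ⟨by simpa using h σ 1 0, by simpa using h σ 0 1⟩

lemma aux_b_zero_of_a {K : Type*} [Field K] {a b c : K} (h : TPSDK K a b c)
    (σ : K →+* ℝ) (ha : σ a = 0) : σ b = 0 := by
  by_contra hb
  have h1 := h σ (-(σ c + 1) / σ b) 1
  rw [ha] at h1
  have h2 : σ b * (-(σ c + 1) / σ b * 1) = -(σ c + 1) := by field_simp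
  rw [h2] at h1
  simp at h1
  linarith

lemma aux_b_zero_of_c {K : Type*} [Field K] {a b c : K} (h : TPSDK K a b c)
    (σ : K →+* ℝ) (hc : σ c = 0) : σ b = 0 := by
  by_contra hb
  have h1 := h σ 1 (-(σ a + 1) / σ b)
  rw [hc] at h1
  have h2 : σ b * (1 * (-(σ a + 1) / σ b)) = -(σ a + 1) := by field_simp
  rw [h2] at h1
  simp at h1
  linarith

/-- Let `K = ℚ(√D)` with conjugation `τ`, and let `α ∈ 𝓞 K` be totally positive
and indecomposable. If `b ∈ ℤ` is nonzero with `b² < 4·N(α)`, then the integral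
binary form `Q(x,y) = αx² + bxy + α′y²` is totally positive definite and
additively indecomposable as an integral (non-classical) form over `𝓞 K`. -/
theorem stmt6 (D : ℤ) (hsf : Squarefree D) (h1 : 1 < D)
    (K : Type*) [Field K] [NumberField K] (r : K) (hr : r ^ 2 = D)
    (hdeg : Module.finrank ℚ K = 2)
    (τ : K →+* K) (hτ : τ r = -r)
    (α : 𝓞 K) (hαpos : ∀ σ : K →+* ℝ, 0 < σ (α : K))
    (hαind : ¬ ∃ β γ : 𝓞 K, (∀ σ : K →+* ℝ, 0 < σ (β : K)) ∧
      (∀ σ : K →+* ℝ, 0 < σ (γ : K)) ∧ β + γ = α)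
    (b : ℤ) (hb : b ≠ 0)
    (hbN : ∀ σ : K →+* ℝ, (b : ℝ) ^ 2 < 4 * σ ((α : K) * τ (α : K))) :
    TPDK K (α : K) (b : K) (τ (α : K)) ∧
    ¬ ∃ a₁ b₁ c₁ a₂ b₂ c₂ : 𝓞 K,
      TPSDK K a₁ b₁ c₁ ∧ TPSDK K a₂ b₂ c₂ ∧
      ¬(a₁ = 0 ∧ b₁ = 0 ∧ c₁ = 0) ∧ ¬(a₂ = 0 ∧ b₂ = 0 ∧ c₂ = 0) ∧
      (a₁ : K) + (a₂ : K) = (α : K) ∧ (b₁ : K) + (b₂ : K) = (b : K) ∧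
      (c₁ : K) + (c₂ : K) = τ (α : K) := by
  obtain ⟨σ₀⟩ := aux_real_embedding D hsf h1 K r hr hdeg
  have hτinj : Function.Injective τ := τ.injective
  have hτsurj : Function.Surjective τ := by
    let ℓ : K →ₗ[ℚ] K :=
      { toFun := τ
        map_add' := map_add τ
        map_smul' := fun q x => by
          simp only [Rat.smul_def, map_mul, map_ratCast, RingHom.id_apply] }
    exact LinearMap.injective_iff_surjective.mp (show Function.Injective ℓ from hτinj)
  let e : K ≃+* K := RingEquiv.ofBijective τ ⟨hτinj, hτsurj⟩
  let E : 𝓞 K ≃+* 𝓞 K := RingOfIntegers.mapRingEquiv e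
  have hE : ((E α : 𝓞 K) : K) = τ (α : K) := rfl
  have hEsymm : ∀ x : 𝓞 K, ((E.symm x : 𝓞 K) : K) = e.symm (x : K) := fun x => rfl
  have hα'pos : ∀ σ : K →+* ℝ, 0 < σ (τ (α : K)) := fun σ => hαpos (σ.comp τ)
  constructor
  · -- positive definiteness
    intro σ u v huv
    have ha := hαpos σ
    have hc := hα'pos σ
    have hd := hbN σ
    rw [map_mul] at hd
    rw [show σ ((b : ℤ) : K) = (b : ℝ) from map_intCast σ b]
    rcases eq_or_ne v 0 with hv | hv
    · subst hv
      have hu : u ≠ 0 := huv.resolve_right (fun h => h rfl)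
      have hu2 : 0 < u ^ 2 := by positivity
      nlinarith
    · have hv2 : 0 < v ^ 2 := by positivity
      nlinarith [sq_nonneg (2 * σ (α : K) * u + (b : ℝ) * v), mul_pos ha hv2,
        mul_pos (mul_pos ha hc) hv2]
  · -- indecomposability
    rintro ⟨a₁, b₁, c₁, a₂, b₂, c₂, hQ1, hQ2, hne1, hne2, hsa, hsb, hsc⟩
    have hzero : ∀ (σ : K →+* ℝ) (x : 𝓞 K), σ (x : K) = 0 → x = 0 := by
      intro σ₀ x h
      have hx0 : (x : K) = 0 := σ₀.injective (by rw [h, map_zero])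
      exact RingOfIntegers.eq_iff.mp (by rw [hx0]; simp)
    -- splitting lemma for an indecomposable target
    have key : ∀ t : 𝓞 K,
        (¬ ∃ β γ : 𝓞 K, (∀ σ : K →+* ℝ, 0 < σ (β : K)) ∧
          (∀ σ : K →+* ℝ, 0 < σ (γ : K)) ∧ β + γ = t) →
        ∀ x y : 𝓞 K, (∀ σ : K →+* ℝ, 0 ≤ σ (x : K)) →
          (∀ σ : K →+* ℝ, 0 ≤ σ (y : K)) → x + y = t → x = 0 ∨ y = 0 := by
      intro t hind x y hx hy hxy
      by_contra hcon
      push_neg at hcon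
      obtain ⟨hx0, hy0⟩ := hcon
      exact hind ⟨x, y,
        fun σ => lt_of_le_of_ne (hx σ) (fun h => hx0 (hzero σ x h.symm)),
        fun σ => lt_of_le_of_ne (hy σ) (fun h => hy0 (hzero σ y h.symm)), hxy⟩
    -- τ α is indecomposable
    have hα'ind : ¬ ∃ β γ : 𝓞 K, (∀ σ : K →+* ℝ, 0 < σ (β : K)) ∧
        (∀ σ : K →+* ℝ, 0 < σ (γ : K)) ∧ β + γ = E α := by
      rintro ⟨β, γ, hβ, hγ, hsum⟩
      refine hαind ⟨E.symm β, E.symm γ, fun σ => ?_, fun σ => ?_, ?_⟩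
      · have hp := hβ (σ.comp e.symm.toRingHom)
        simpa [RingHom.comp_apply, hEsymm] using hp
      · have hp := hγ (σ.comp e.symm.toRingHom)
        simpa [RingHom.comp_apply, hEsymm] using hp
      · have hs : E.symm β + E.symm γ = E.symm (E α) := by rw [← map_add, hsum]
        simpa using hs
    -- sums in 𝓞 K
    have hsaO : a₁ + a₂ = α := RingOfIntegers.eq_iff.mp (by push_cast; exact hsa)
    have hscO : c₁ + c₂ = E α := RingOfIntegers.eq_iff.mp (by push_cast; rw [hE]; exact hsc)
    have haor := key α hαind a₁ a₂ (fun σ => (aux_a_nonneg hQ1 σ).1)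
      (fun σ => (aux_a_nonneg hQ2 σ).1) hsaO
    have hcor := key (E α) hα'ind c₁ c₂ (fun σ => (aux_a_nonneg hQ1 σ).2)
      (fun σ => (aux_a_nonneg hQ2 σ).2) hscO
    -- middle coefficient facts
    have hb1a : a₁ = 0 → b₁ = 0 := fun h =>
      hzero σ₀ b₁ (aux_b_zero_of_a hQ1 σ₀ (by rw [h]; simp))
    have hb2a : a₂ = 0 → b₂ = 0 := fun h =>
      hzero σ₀ b₂ (aux_b_zero_of_a hQ2 σ₀ (by rw [h]; simp))
    have hb1c : c₁ = 0 → b₁ = 0 := fun h =>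
      hzero σ₀ b₁ (aux_b_zero_of_c hQ1 σ₀ (by rw [h]; simp))
    have hb2c : c₂ = 0 → b₂ = 0 := fun h =>
      hzero σ₀ b₂ (aux_b_zero_of_c hQ2 σ₀ (by rw [h]; simp))
    have hbK : ∀ (h₁ : b₁ = 0) (h₂ : b₂ = 0), False := by
      intro h₁ h₂
      rw [h₁, h₂] at hsb
      simp at hsb
      exact hb (by exact_mod_cast hsb.symm)
    rcases haor with h | h <;> rcases hcor with h' | h'
    · exact hne1 ⟨h, hb1a h, h'⟩
    · exact hbK (hb1a h) (hb2c h')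
    · exact hbK (hb1c h') (hb2a h)
    · exact hne2 ⟨h, hb2a h, h'⟩
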